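/- Let $G$ be a finite connected graph on $n \geq 2$ vertices. Then $\left| \sum_{g} (-1)^{|E(g)|} \right| \leq N_{ST}(G)$, where the sum is over all connected spanning subgraphs $g$ of $G$ (subgraphs with the same vertex set, whose edge set is a subset of $E(G)$, and which are connected), and $N_{ST}(G)$ is the number of spanning trees of $G$. -/

import Mathlib

open scoped Classical

namespace UrsellAux

open Finset SimpleGraph

variable {V : Type*} [Fintype V] [DecidableEq V]

/-- The simple graph on `V` whose edges are the given finset. -/
def gr (s : Finset (Sym2 V)) : SimpleGraph V :=
  SimpleGraph.fromEdgeSet (s : Set (Sym2 V))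

lemma gr_adj {s : Finset (Sym2 V)} {a b : V} :
    (gr s).Adj a b ↔ s(a, b) ∈ s ∧ a ≠ b := by
  simp [gr, SimpleGraph.fromEdgeSet_adj]

lemma gr_mono {s t : Finset (Sym2 V)} (h : s ⊆ t) : gr s ≤ gr t :=
  SimpleGraph.fromEdgeSet_mono (by exact_mod_cast h)

lemma reach_transport {s : Finset (Sym2 V)} {X : SimpleGraph V}
    (hadj : ∀ a b : V, (gr s).Adj a b → X.Reachable a b) {u v : V}
    (r : (gr s).Reachable u v) : X.Reachable u v := by
  obtain ⟨w⟩ := r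
  induction w with
  | nil => exact SimpleGraph.Reachable.refl _
  | cons h p ih => exact (hadj _ _ h).trans ih

lemma conn_transport {s : Finset (Sym2 V)} {X : SimpleGraph V}
    (hc : (gr s).Connected)
    (hadj : ∀ a b : V, (gr s).Adj a b → X.Reachable a b) : X.Connected := by
  haveI hne : Nonempty V := hc.nonempty
  exact SimpleGraph.Connected.mk (fun a b => reach_transport hadj (hc.preconnected a b))

lemma conn_transport_one {t : Finset (Sym2 V)} {X : SimpleGraph V}
    (hc : (gr t).Connected) {a b : V}
    (hX : ∀ x y, (gr t).Adj x y → s(x, y) ≠ s(a, b) → X.Adj x y)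
    (hr : X.Reachable a b) : X.Connected := by
  refine conn_transport hc ?_
  intro x y hxy
  by_cases hf : s(x, y) = s(a, b)
  · rw [Sym2.eq_iff] at hf
    rcases hf with ⟨rfl, rfl⟩ | ⟨rfl, rfl⟩
    · exact hr
    · exact hr.symm
  · exact (hX x y hxy hf).reachable

lemma gr_deleteEdges (t : Finset (Sym2 V)) (f : Sym2 V) :
    (gr t).deleteEdges {f} = gr (t.erase f) := by
  ext a b
  simp only [SimpleGraph.deleteEdges_adj, gr_adj, Set.mem_singleton_iff, Finset.mem_erase]
  tauto

lemma crossing {X : SimpleGraph V} (S : Set V) {u v : V} (p : X.Walk u v) :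
    p.IsPath → u ∈ S → v ∉ S →
    ∃ a b, X.Adj a b ∧ a ∈ S ∧ b ∉ S ∧
      (X.deleteEdges {s(a, b)}).Reachable u a ∧ (X.deleteEdges {s(a, b)}).Reachable b v := by
  induction p with
  | nil => exact fun _ hu hv => absurd hu hv
  | @cons x y w h q ih =>
    intro hp hu hv
    have hhead : s(x, y) ∉ q.edges := by
      have hnd := hp.edges_nodup
      simp only [SimpleGraph.Walk.edges_cons, List.nodup_cons] at hnd
      exact hnd.1
    by_cases hy : y ∈ S
    · obtain ⟨a, b, hab, ha, hb, r1, r2⟩ := ih hp.of_cons hy hv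
      refine ⟨a, b, hab, ha, hb, ?_, r2⟩
      -- to prepend the edge x-y we need s(x,y) ≠ s(a,b); this follows since
      -- r1 lives in the graph with s(a,b) deleted... we instead argue directly:
      by_cases hne : s(x, y) = s(a, b)
      · -- then a,b ∈ {x,y}; since a ∈ S, b ∉ S, y ∈ S : a = y, b = x? impossible since x=u ∈ S
        rw [Sym2.eq_iff] at hne
        rcases hne with ⟨rfl, rfl⟩ | ⟨rfl, rfl⟩
        · exact absurd hy hb
        · exact absurd hu hb
      · have hadj : (X.deleteEdges {s(a, b)}).Adj x y := by
          simp only [SimpleGraph.deleteEdges_adj, Set.mem_singleton_iff]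
          exact ⟨h, hne⟩
        exact hadj.reachable.trans r1
    · refine ⟨x, y, h, hu, hy, SimpleGraph.Reachable.refl _, ?_⟩
      refine ⟨q.toDeleteEdges {s(x, y)} ?_⟩
      intro e he
      simp only [Set.mem_singleton_iff]
      exact fun hh => hhead (hh ▸ he)

/-- weight of an edge, via an arbitrary enumeration -/
noncomputable def k : Sym2 V → ℕ := fun e => ((Fintype.equivFin (Sym2 V)) e : ℕ)

lemma k_inj : Function.Injective (k (V := V)) := by
  intro a b h
  exact (Fintype.equivFin (Sym2 V)).injective (Fin.val_injective h)

noncomputable def wt (s : Finset (Sym2 V)) : ℕ := ∑ e ∈ s, 2 ^ k e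

/-- edge-minimal connected spanning subgraph (a spanning tree, combinatorially) -/
def goodT (t : Finset (Sym2 V)) : Prop :=
  (gr t).Connected ∧ ∀ f ∈ t, ¬(gr (t.erase f)).Connected

/-- the externally passive edges of `t` in `G` -/
noncomputable def P (G : SimpleGraph V) (t : Finset (Sym2 V)) : Finset (Sym2 V) :=
  (G.edgeFinset \ t).filter
    (fun e => ∀ f ∈ t, (gr (insert e (t.erase f))).Connected → k f < k e)

def good (G : SimpleGraph V) (t h : Finset (Sym2 V)) : Prop :=
  t ⊆ h ∧ goodT t ∧ h \ t ⊆ P G t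

lemma exists_good (G : SimpleGraph V) {h : Finset (Sym2 V)}
    (hh : h ⊆ G.edgeFinset) (hc : (gr h).Connected) : ∃ t, good G t h := by
  obtain ⟨t, htF, hmin⟩ := Finset.exists_min_image
    (h.powerset.filter fun t => (gr t).Connected) wt ⟨h, by simp [hc]⟩
  simp only [mem_filter, mem_powerset] at htF
  obtain ⟨hth, htc⟩ := htF
  refine ⟨t, hth, ⟨htc, ?_⟩, ?_⟩
  · intro f hf hcon
    have hmem : t.erase f ∈ h.powerset.filter fun t => (gr t).Connected :=
      mem_filter.2 ⟨mem_powerset.2 ((erase_subset _ _).trans hth), hcon⟩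
    have hge := hmin _ hmem
    have hlt : wt (t.erase f) < wt t := by
      refine Finset.sum_lt_sum_of_subset (erase_subset f t) hf (notMem_erase f t) ?_ ?_
      · positivity
      · intro j _ _; positivity
    omega
  · intro e he
    rw [mem_sdiff] at he
    refine mem_filter.2 ⟨mem_sdiff.2 ⟨hh he.1, he.2⟩, ?_⟩
    intro f hf hcon
    have hef : e ≠ f := fun hh' => he.2 (hh' ▸ hf)
    have hmem : insert e (t.erase f) ∈ h.powerset.filter fun t => (gr t).Connected :=
      mem_filter.2 ⟨mem_powerset.2 (insert_subset he.1 ((erase_subset _ _).trans hth)), hcon⟩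
    have hge := hmin _ hmem
    have h1 : wt (insert e (t.erase f)) = 2 ^ k e + wt (t.erase f) :=
      Finset.sum_insert (fun hmem' => he.2 (erase_subset _ _ hmem'))
    have h2 : wt t = 2 ^ k f + wt (t.erase f) := (Finset.add_sum_erase t _ hf).symm
    have hkk : 2 ^ k f ≤ 2 ^ k e := by omega
    have hle2 : k f ≤ k e := (Nat.pow_le_pow_iff_right one_lt_two).1 hkk
    have hne2 : k f ≠ k e := fun hfe => hef (k_inj hfe).symm
    omega

lemma good_aux (G : SimpleGraph V) {h t t' : Finset (Sym2 V)} (hh : h ⊆ G.edgeFinset)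
    (ht : good G t h) (ht' : good G t' h) {u v : V} (huv : s(u, v) ∈ t' \ t)
    (hmin : ∀ f ∈ t \ t', k s(u, v) ≤ k f) : False := by
  rw [mem_sdiff] at huv
  have heG : s(u, v) ∈ G.edgeSet := by
    have := hh (ht'.1 huv.1)
    rwa [mem_edgeFinset] at this
  have huv_ne : u ≠ v := by
    have := G.not_isDiag_of_mem_edgeSet heG
    simpa using this
  set S : Set V := {x | (gr (t'.erase s(u, v))).Reachable u x} with hS
  have hvS : v ∉ S := by
    intro hvS
    apply ht'.2.1.2 s(u, v) huv.1
    refine conn_transport_one ht'.2.1.1 (a := u) (b := v) ?_ hvS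
    intro x y hxy hne
    exact gr_adj.2 ⟨mem_erase.2 ⟨hne, (gr_adj.1 hxy).1⟩, hxy.ne⟩
  have huS : u ∈ S := SimpleGraph.Reachable.refl _
  have htc : (gr t).Connected := ht.2.1.1
  obtain ⟨w⟩ := htc.preconnected u v
  obtain ⟨a, b, hab, haS, hbS, r1, r2⟩ :=
    crossing S (w.toPath : (gr t).Walk u v) w.toPath.2 huS hvS
  have hfT : s(a, b) ∈ t := (gr_adj.1 hab).1
  have hab_ne : a ≠ b := hab.ne
  have hfe : s(a, b) ≠ s(u, v) := fun hfe => huv.2 (hfe ▸ hfT)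
  have hft' : s(a, b) ∉ t' := by
    intro hft'
    apply hbS
    have hadj' : (gr (t'.erase s(u, v))).Adj a b :=
      gr_adj.2 ⟨mem_erase.2 ⟨hfe, hft'⟩, hab_ne⟩
    exact haS.trans hadj'.reachable
  rw [gr_deleteEdges] at r1 r2
  have hle : gr (t.erase s(a, b)) ≤ gr (insert s(u, v) (t.erase s(a, b))) :=
    gr_mono (subset_insert _ _)
  have r1' : (gr (insert s(u, v) (t.erase s(a, b)))).Reachable u a := r1.mono hle
  have r2' : (gr (insert s(u, v) (t.erase s(a, b)))).Reachable b v := r2.mono hle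
  have hadj_uv : (gr (insert s(u, v) (t.erase s(a, b)))).Adj u v :=
    gr_adj.2 ⟨mem_insert_self _ _, huv_ne⟩
  have rab : (gr (insert s(u, v) (t.erase s(a, b)))).Reachable a b :=
    (r1'.symm.trans hadj_uv.reachable).trans r2'.symm
  have hconn' : (gr (insert s(u, v) (t.erase s(a, b)))).Connected := by
    refine conn_transport_one htc (a := a) (b := b) ?_ rab
    intro x y hxy hne
    exact gr_adj.2 ⟨mem_insert.2 (Or.inr (mem_erase.2 ⟨hne, (gr_adj.1 hxy).1⟩)), hxy.ne⟩
  have heP : s(u, v) ∈ P G t := ht.2.2 (mem_sdiff.2 ⟨ht'.1 huv.1, huv.2⟩)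
  have hlt : k s(a, b) < k s(u, v) := (mem_filter.1 heP).2 s(a, b) hfT hconn'
  have hge := hmin s(a, b) (mem_sdiff.2 ⟨hfT, hft'⟩)
  omega

lemma good_unique (G : SimpleGraph V) {h t t' : Finset (Sym2 V)} (hh : h ⊆ G.edgeFinset)
    (ht : good G t h) (ht' : good G t' h) : t = t' := by
  by_contra hne
  have hd : ((t \ t') ∪ (t' \ t)).Nonempty := by
    rw [nonempty_iff_ne_empty]
    intro hemp
    rw [Finset.union_eq_empty] at hemp
    exact hne (subset_antisymm (sdiff_eq_empty_iff_subset.1 hemp.1)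
      (sdiff_eq_empty_iff_subset.1 hemp.2))
  obtain ⟨e, hed, hemin⟩ := Finset.exists_min_image _ k hd
  have key : ∀ (e' : Sym2 V), e' ∈ t' \ t → (∀ f ∈ t \ t', k e' ≤ k f) → False := by
    intro e'
    induction e' using Sym2.ind with
    | _ x y => exact fun h1 h2 => good_aux G hh ht ht' h1 h2
  have key' : ∀ (e' : Sym2 V), e' ∈ t \ t' → (∀ f ∈ t' \ t, k e' ≤ k f) → False := by
    intro e'
    induction e' using Sym2.ind with
    | _ x y => exact fun h1 h2 => good_aux G hh ht' ht h1 h2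
  rcases mem_union.1 hed with he | he
  · exact key' e he (fun f hf => hemin f (mem_union.2 (Or.inr hf)))
  · exact key e he (fun f hf => hemin f (mem_union.2 (Or.inl hf)))

lemma gr_edgeFinset_eq {G : SimpleGraph V} {s : Finset (Sym2 V)} (hs : s ⊆ G.edgeFinset) :
    (gr s).edgeFinset = s := by
  apply Finset.coe_injective
  rw [SimpleGraph.coe_edgeFinset]
  rw [gr, SimpleGraph.edgeSet_fromEdgeSet]
  ext e
  simp only [Set.mem_diff, Set.mem_setOf_eq, Finset.mem_coe]
  constructor
  · exact fun h => h.1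
  · intro hes
    exact ⟨hes, G.not_isDiag_of_mem_edgeSet (SimpleGraph.mem_edgeFinset.1 (hs hes))⟩

lemma gr_le {G : SimpleGraph V} {s : Finset (Sym2 V)} (hs : s ⊆ G.edgeFinset) :
    gr s ≤ G := by
  have : (s : Set (Sym2 V)) ⊆ G.edgeSet := by
    rw [← SimpleGraph.coe_edgeFinset]
    exact_mod_cast hs
  have h2 := SimpleGraph.fromEdgeSet_mono this
  rwa [SimpleGraph.fromEdgeSet_edgeSet] at h2

lemma gr_of_le {G H : SimpleGraph V} (_ : H ≤ G) : gr H.edgeFinset = H := by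
  rw [gr, SimpleGraph.coe_edgeFinset, SimpleGraph.fromEdgeSet_edgeSet]

end UrsellAux

/-- The alternating sum of `(-1)^{|E(g)|}` over connected spanning subgraphs `g` of a finite
connected graph `G` on at least two vertices is bounded in absolute value by the number of
spanning trees of `G` (Rota / Ursell function bound). -/
theorem ursell_bound {V : Type*} [Fintype V] [DecidableEq V]
    (G : SimpleGraph V) (hG : G.Connected) (hV : 2 ≤ Fintype.card V) :
    |∑ H ∈ (Finset.univ : Finset (SimpleGraph V)).filter
        (fun H => H ≤ G ∧ H.Connected),
        (-1 : ℤ) ^ H.edgeFinset.card| ≤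
      ((Finset.univ : Finset (SimpleGraph V)).filter
        (fun T => T ≤ G ∧ T.IsTree)).card := by
  classical
  open Finset SimpleGraph UrsellAux in
  set CS := G.edgeFinset.powerset.filter (fun s => (gr s).Connected) with hCS
  set TS := G.edgeFinset.powerset.filter (fun t => goodT t) with hTS
  have hsum : ∑ H ∈ (Finset.univ : Finset (SimpleGraph V)).filter
      (fun H => H ≤ G ∧ H.Connected), (-1 : ℤ) ^ H.edgeFinset.card
      = ∑ s ∈ CS, (-1 : ℤ) ^ s.card := by
    refine Finset.sum_nbij' (fun H => H.edgeFinset) (fun s => gr s) ?_ ?_ ?_ ?_ ?_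
    · intro H hH
      simp only [Finset.mem_filter, Finset.mem_univ, true_and] at hH
      refine Finset.mem_filter.2 ⟨Finset.mem_powerset.2 ?_, ?_⟩
      · exact SimpleGraph.edgeFinset_subset_edgeFinset.2 hH.1
      · rw [gr_of_le hH.1]; exact hH.2
    · intro s hs
      simp only [hCS, Finset.mem_filter, Finset.mem_powerset] at hs
      exact Finset.mem_filter.2 ⟨Finset.mem_univ _, gr_le hs.1, hs.2⟩
    · intro H hH
      simp only [Finset.mem_filter, Finset.mem_univ, true_and] at hH
      exact gr_of_le hH.1
    · intro s hs
      simp only [hCS, Finset.mem_filter, Finset.mem_powerset] at hs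
      exact gr_edgeFinset_eq hs.1
    · intro H hH
      rfl
  rw [hsum]
  set Φ : Finset (Sym2 V) → Finset (Sym2 V) :=
    fun h => if hx : ∃ t, good G t h then hx.choose else ∅ with hPhi
  have hgoodPhi : ∀ h ∈ CS, good G (Φ h) h := by
    intro h hhCS
    simp only [hCS, Finset.mem_filter, Finset.mem_powerset] at hhCS
    have hex := exists_good G hhCS.1 hhCS.2
    simp only [hPhi, dif_pos hex]
    exact hex.choose_spec
  have hmaps : ∀ h ∈ CS, Φ h ∈ TS := by
    intro h hh
    have hg := hgoodPhi h hh
    simp only [hCS, Finset.mem_filter, Finset.mem_powerset] at hh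
    exact Finset.mem_filter.2 ⟨Finset.mem_powerset.2 (hg.1.trans hh.1), hg.2.1⟩
  rw [← Finset.sum_fiberwise_of_maps_to hmaps]
  have hfiber : ∀ t ∈ TS, ∑ h ∈ CS.filter (fun h => Φ h = t), (-1 : ℤ) ^ h.card
      = (-1 : ℤ) ^ t.card * (if P G t = ∅ then 1 else 0) := by
    intro t htTS
    simp only [hTS, Finset.mem_filter, Finset.mem_powerset] at htTS
    have hPsub : P G t ⊆ G.edgeFinset \ t := Finset.filter_subset _ _
    have hset : CS.filter (fun h => Φ h = t)
        = (P G t).powerset.image (fun S => t ∪ S) := by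
      ext h
      simp only [Finset.mem_filter, Finset.mem_image, Finset.mem_powerset]
      constructor
      · rintro ⟨hhCS, hPh⟩
        have hg := hgoodPhi h hhCS
        rw [hPh] at hg
        exact ⟨h \ t, hg.2.2, Finset.union_sdiff_of_subset hg.1⟩
      · rintro ⟨S, hSP, rfl⟩
        have hSsub : S ⊆ G.edgeFinset := fun x hx =>
          (Finset.mem_sdiff.1 (hPsub (hSP hx))).1
        have hsub : t ∪ S ⊆ G.edgeFinset := Finset.union_subset htTS.1 hSsub
        have hconn : (gr (t ∪ S)).Connected :=
          (htTS.2.1).mono (gr_mono Finset.subset_union_left)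
        have hCSmem : t ∪ S ∈ CS :=
          Finset.mem_filter.2 ⟨Finset.mem_powerset.2 hsub, hconn⟩
        refine ⟨hCSmem, ?_⟩
        have hgood : good G t (t ∪ S) := by
          refine ⟨Finset.subset_union_left, htTS.2, ?_⟩
          rw [Finset.union_sdiff_left]
          exact (Finset.sdiff_subset).trans hSP
        exact (good_unique G hsub (hgoodPhi _ hCSmem) hgood)
    rw [hset]
    rw [Finset.sum_image ?hinj]
    case hinj =>
      intro S1 h1 S2 h2 heq
      rw [Finset.mem_coe, Finset.mem_powerset] at h1 h2
      have hd1 : Disjoint S1 t := by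
        have := h1.trans hPsub
        exact Finset.disjoint_left.2 fun x hx => (Finset.mem_sdiff.1 (this hx)).2
      have hd2 : Disjoint S2 t := by
        have := h2.trans hPsub
        exact Finset.disjoint_left.2 fun x hx => (Finset.mem_sdiff.1 (this hx)).2
      have e1 : (t ∪ S1) \ t = S1 := by
        rw [Finset.union_sdiff_left, Finset.sdiff_eq_self_iff_disjoint.2 hd1]
      have e2 : (t ∪ S2) \ t = S2 := by
        rw [Finset.union_sdiff_left, Finset.sdiff_eq_self_iff_disjoint.2 hd2]
      rw [← e1, ← e2, show t ∪ S1 = t ∪ S2 from heq]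
    have hcardeq : ∀ S ∈ (P G t).powerset, (t ∪ S).card = t.card + S.card := by
      intro S hS
      rw [Finset.mem_powerset] at hS
      have hd : Disjoint t S := by
        have := hS.trans hPsub
        exact Finset.disjoint_right.2 fun x hx => (Finset.mem_sdiff.1 (this hx)).2
      exact Finset.card_union_of_disjoint hd
    calc ∑ S ∈ (P G t).powerset, (-1 : ℤ) ^ (t ∪ S).card
        = ∑ S ∈ (P G t).powerset, (-1 : ℤ) ^ t.card * (-1 : ℤ) ^ S.card := by
          refine Finset.sum_congr rfl fun S hS => ?_
          rw [hcardeq S hS, pow_add]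
      _ = (-1 : ℤ) ^ t.card * ∑ S ∈ (P G t).powerset, (-1 : ℤ) ^ S.card := by
          rw [Finset.mul_sum]
      _ = (-1 : ℤ) ^ t.card * (if P G t = ∅ then 1 else 0) := by
          rw [Finset.sum_powerset_neg_one_pow_card]
  rw [Finset.sum_congr rfl hfiber]
  have habs : |∑ t ∈ TS, (-1 : ℤ) ^ t.card * (if P G t = ∅ then 1 else 0)|
      ≤ (TS.card : ℤ) := by
    calc |∑ t ∈ TS, (-1 : ℤ) ^ t.card * (if P G t = ∅ then 1 else 0)|
        ≤ ∑ t ∈ TS, |(-1 : ℤ) ^ t.card * (if P G t = ∅ then 1 else 0)| :=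
          Finset.abs_sum_le_sum_abs _ _
      _ ≤ ∑ _t ∈ TS, (1 : ℤ) := by
          refine Finset.sum_le_sum fun t _ => ?_
          rw [abs_mul, abs_pow, abs_neg, abs_one, one_pow, one_mul]
          split_ifs <;> simp
      _ = (TS.card : ℤ) := by rw [Finset.sum_const, nsmul_eq_mul, mul_one]
  refine habs.trans ?_
  have hcard : TS.card ≤ ((Finset.univ : Finset (SimpleGraph V)).filter
      (fun T => T ≤ G ∧ T.IsTree)).card := by
    refine Finset.card_le_card_of_injOn (fun t => gr t) ?_ ?_
    · intro t htTS
      simp only [hTS, Finset.mem_coe, Finset.mem_filter, Finset.mem_powerset] at htTS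
      refine Finset.mem_filter.2 ⟨Finset.mem_univ _, gr_le htTS.1, ?_⟩
      refine ⟨htTS.2.1, ?_⟩
      rw [SimpleGraph.isAcyclic_iff_forall_adj_isBridge]
      intro x y hxy
      rw [SimpleGraph.isBridge_iff]
      intro hreach
      apply htTS.2.2 s(x, y) (gr_adj.1 hxy).1
      have hreach' : ((gr t).deleteEdges {s(x, y)}).Reachable x y := hreach
      rw [gr_deleteEdges] at hreach'
      refine conn_transport_one htTS.2.1 (a := x) (b := y) ?_ hreach'
      intro p q hpq hne
      exact gr_adj.2 ⟨Finset.mem_erase.2 ⟨hne, (gr_adj.1 hpq).1⟩, hpq.ne⟩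
    · intro t1 h1 t2 h2 heq
      simp only [hTS, Finset.mem_filter, Finset.mem_powerset, Finset.mem_coe] at h1 h2
      have e1 := gr_edgeFinset_eq (G := G) h1.1
      have e2 := gr_edgeFinset_eq (G := G) h2.1
      have heq' : gr t1 = gr t2 := heq
      rw [← e1, ← e2, heq']
  exact_mod_cast hcard
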